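/- Let r_j = binom(2j, j)/4^j. Then for all j ≥ 1, 1/√(π(j+1)) ≤ r_j ≤ 1/√(πj). -/

import Mathlib

open Real Filter Stirling Nat Topology

noncomputable def rr (j : ℕ) : ℝ := (Nat.choose (2*j) j : ℝ) / 4^j
noncomputable def ff (j : ℕ) : ℝ := Real.pi * j * (rr j)^2
noncomputable def gg (j : ℕ) : ℝ := Real.pi * ((j:ℝ)+1) * (rr j)^2

lemma rr_pos (j : ℕ) : 0 < rr j := by
  have h : 0 < Nat.choose (2*j) j := Nat.choose_pos (by omega)
  have : (0:ℝ) < (Nat.choose (2*j) j : ℝ) := by exact_mod_cast h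
  unfold rr; positivity

lemma rr_succ (j : ℕ) : rr (j+1) = rr j * (2*(j:ℝ)+1) / (2*((j:ℝ)+1)) := by
  have h := Nat.succ_mul_centralBinom_succ j
  have h' : ((j:ℝ)+1) * (Nat.choose (2*(j+1)) (j+1) : ℝ)
      = 2*(2*(j:ℝ)+1) * (Nat.choose (2*j) j : ℝ) := by exact_mod_cast h
  unfold rr
  have h4 : (4:ℝ)^(j+1) ≠ 0 := by positivity
  have hj1 : ((j:ℝ)+1) ≠ 0 := by positivity
  field_simp
  linear_combination 2 * (4:ℝ)^j * h'

lemma ff_step (j : ℕ) (hj : 1 ≤ j) : ff j ≤ ff (j+1) := by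
  have hJ : (1:ℝ) ≤ j := by exact_mod_cast hj
  have hr := rr_pos j
  unfold ff
  rw [rr_succ, div_pow]
  push_cast
  rw [show Real.pi * ((j:ℝ)+1) * ((rr j * (2*(j:ℝ)+1))^2 / (2*((j:ℝ)+1))^2) = Real.pi * ((j:ℝ)+1) * (rr j * (2*(j:ℝ)+1))^2 / (2*((j:ℝ)+1))^2 by ring, le_div_iff₀ (by positivity)]
  have h1 : 0 < Real.pi := Real.pi_pos
  nlinarith [mul_pos h1 (mul_pos (pow_pos hr 2) (show (0:ℝ) < (j:ℝ)+1 by linarith))]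

lemma gg_step (j : ℕ) (hj : 1 ≤ j) : gg (j+1) ≤ gg j := by
  have hJ : (1:ℝ) ≤ j := by exact_mod_cast hj
  have hr := rr_pos j
  unfold gg
  rw [rr_succ, div_pow]
  push_cast
  rw [show Real.pi * ((j:ℝ)+1+1) * ((rr j * (2*(j:ℝ)+1))^2 / (2*((j:ℝ)+1))^2) = Real.pi * ((j:ℝ)+1+1) * (rr j * (2*(j:ℝ)+1))^2 / (2*((j:ℝ)+1))^2 by ring, div_le_iff₀ (by positivity)]
  have h1 : 0 < Real.pi := Real.pi_pos
  nlinarith [mul_pos h1 (mul_pos (pow_pos hr 2) (show (0:ℝ) < 3*(j:ℝ)+2 by linarith))]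

lemma ff_mono : ∀ m n : ℕ, 1 ≤ m → m ≤ n → ff m ≤ ff n := by
  intro m n hm hmn
  induction n, hmn using Nat.le_induction with
  | base => exact le_refl _
  | succ n hn ih => exact ih.trans (ff_step n (hm.trans hn))

lemma gg_anti : ∀ m n : ℕ, 1 ≤ m → m ≤ n → gg n ≤ gg m := by
  intro m n hm hmn
  induction n, hmn using Nat.le_induction with
  | base => exact le_refl _
  | succ n hn ih => exact (gg_step n (hm.trans hn)).trans ih


lemma sq_id (j : ℕ) (hj : 1 ≤ j) :
    (rr j)^2 * j = (stirlingSeq (2*j))^2 / (stirlingSeq j)^4 := by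
  have hJ : (0:ℝ) < j := by exact_mod_cast hj
  have hE : (0:ℝ) < Real.exp 1 := Real.exp_pos 1
  have key : (Nat.choose (2*j) j : ℝ) * (j ! : ℝ) * (j ! : ℝ) = ((2*j)! : ℝ) := by
    have h := Nat.choose_mul_factorial_mul_factorial (show j ≤ 2*j by omega)
    rw [show 2*j - j = j by omega] at h
    exact_mod_cast h
  have key2 : (Nat.choose (2*j) j : ℝ)^2 * (j ! : ℝ)^4 = ((2*j)! : ℝ)^2 := by
    linear_combination ((Nat.choose (2*j) j : ℝ) * (j ! : ℝ)^2 + ((2*j)! : ℝ)) * key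
  set P : ℝ := ((j:ℝ)/Real.exp 1)^(4*j) with hPdef
  have hP : 0 < P := by positivity
  have hA : (stirlingSeq (2*j))^2 = ((2*j)! : ℝ)^2 / (4*(j:ℝ) * ((16:ℝ)^j * P)) := by
    rw [stirlingSeq, div_pow, mul_pow, Real.sq_sqrt (by positivity)]
    push_cast
    rw [← pow_mul]
    have h2 : ((2*(j:ℝ))/Real.exp 1)^(2*j*2) = (16:ℝ)^j * P := by
      rw [show (2*(j:ℝ))/Real.exp 1 = 2 * ((j:ℝ)/Real.exp 1) by ring,
        show 2*j*2 = 4*j by ring, mul_pow, hPdef]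
      congr 1
      rw [pow_mul]; norm_num
    rw [h2]; ring_nf
  have hB : (stirlingSeq j)^4 = ((j)! : ℝ)^4 / ((4*(j:ℝ)^2) * P) := by
    have hs : (Real.sqrt (2*(j:ℝ)))^4 = 4*(j:ℝ)^2 := by
      rw [show (4:ℕ) = 2*2 from rfl, pow_mul, Real.sq_sqrt (by positivity)]; ring
    rw [stirlingSeq, div_pow, mul_pow, hs, ← pow_mul, show j*4 = 4*j by ring, hPdef]
  rw [hA, hB, rr]
  have hf : ((j)! : ℝ) ≠ 0 := by positivity
  have h16 : ((16:ℝ))^j = ((4:ℝ)^j)^2 := by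
    rw [← pow_mul, show j*2 = 2*j by ring, pow_mul]; norm_num
  have h4 : ((4:ℝ))^j ≠ 0 := by positivity
  field_simp
  rw [h16]
  linear_combination ((j:ℝ) * P * ((4:ℝ)^j)^2 * 4 + ((j:ℝ)^2-(j:ℝ)) * (j:ℝ)^(j*4) * ((Real.exp 1)⁻¹)^(j*4) * (4:ℝ)^(j*2) * 4 + (4:ℝ)^(j*2) - 4*(j:ℝ)^2*(j:ℝ)^(j*4)*((Real.exp 1)⁻¹)^(j*4)*(4:ℝ)^(j*2)) * key2

lemma tendsto_two_mul : Tendsto (fun j : ℕ => 2*j) atTop atTop :=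
  tendsto_atTop_atTop.mpr fun b => ⟨b, fun n hn => by omega⟩

lemma tendsto_ff : Tendsto ff atTop (𝓝 1) := by
  have hs := tendsto_stirlingSeq_sqrt_pi
  have h2 : Tendsto (fun j : ℕ => stirlingSeq (2*j)) atTop (𝓝 (Real.sqrt Real.pi)) :=
    hs.comp tendsto_two_mul
  have hsp : 0 < Real.sqrt Real.pi := Real.sqrt_pos.mpr Real.pi_pos
  have hne : (Real.sqrt Real.pi)^4 ≠ 0 := by positivity
  have hlim : Tendsto (fun j : ℕ => Real.pi * ((stirlingSeq (2*j))^2 / (stirlingSeq j)^4))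
      atTop (𝓝 (Real.pi * ((Real.sqrt Real.pi)^2/(Real.sqrt Real.pi)^4))) :=
    tendsto_const_nhds.mul ((h2.pow 2).div (hs.pow 4) hne)
  have hval : Real.pi * ((Real.sqrt Real.pi)^2/(Real.sqrt Real.pi)^4) = 1 := by
    rw [show (4:ℕ) = 2*2 from rfl, pow_mul, Real.sq_sqrt Real.pi_pos.le]
    field_simp
  have h3 : Tendsto ff atTop (𝓝 (Real.pi * ((Real.sqrt Real.pi)^2/(Real.sqrt Real.pi)^4))) := by
    refine hlim.congr' ?_
    filter_upwards [eventually_ge_atTop 1] with n hn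
    rw [ff, ← sq_id n hn]; ring
  rwa [hval] at h3

lemma tendsto_gg : Tendsto gg atTop (𝓝 1) := by
  have h2 : Tendsto (fun j : ℕ => ((j:ℝ)+1)/j) atTop (𝓝 1) := by
    have h3 : Tendsto (fun n : ℕ => 1 + 1/(n:ℝ)) atTop (𝓝 (1+0)) :=
      tendsto_const_nhds.add tendsto_one_div_atTop_nhds_zero_nat
    rw [add_zero] at h3
    refine h3.congr' ?_
    filter_upwards [eventually_ge_atTop 1] with n hn
    have : ((n:ℝ)) ≠ 0 := by
      have : (1:ℝ) ≤ (n:ℝ) := by exact_mod_cast hn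
      linarith
    field_simp
  have h1 : Tendsto (fun j : ℕ => ff j * (((j:ℝ)+1)/j)) atTop (𝓝 (1*1)) := tendsto_ff.mul h2
  rw [one_mul] at h1
  refine h1.congr' ?_
  filter_upwards [eventually_ge_atTop 1] with n hn
  have hn' : ((n:ℝ)) ≠ 0 := by
    have : (1:ℝ) ≤ (n:ℝ) := by exact_mod_cast hn
    linarith
  rw [ff, gg]
  field_simp

theorem stmt5 (j : ℕ) (hj : 1 ≤ j) :
    1 / Real.sqrt (Real.pi * ((j:ℝ)+1)) ≤ (Nat.choose (2*j) j : ℝ) / 4^j ∧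
    (Nat.choose (2*j) j : ℝ) / 4^j ≤ 1 / Real.sqrt (Real.pi * (j:ℝ)) := by
  have hr := rr_pos j
  have hJ : (0:ℝ) < j := by exact_mod_cast hj
  have hpi := Real.pi_pos
  have hf : ff j ≤ 1 :=
    ge_of_tendsto tendsto_ff (eventually_atTop.mpr ⟨j, fun n hn => ff_mono j n hj hn⟩)
  have hg : 1 ≤ gg j :=
    le_of_tendsto tendsto_gg (eventually_atTop.mpr ⟨j, fun n hn => gg_anti j n hj hn⟩)
  have hrr : rr j = (Nat.choose (2*j) j : ℝ) / 4^j := rfl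
  constructor
  · -- lower bound
    have h1 : 1 / (Real.pi * ((j:ℝ)+1)) ≤ (rr j)^2 := by
      rw [div_le_iff₀ (by positivity)]
      rw [gg] at hg; linarith [hg]
    calc 1 / Real.sqrt (Real.pi * ((j:ℝ)+1))
        = Real.sqrt (1 / (Real.pi * ((j:ℝ)+1))) := by
          rw [one_div, one_div, Real.sqrt_inv]
      _ ≤ Real.sqrt ((rr j)^2) := Real.sqrt_le_sqrt h1
      _ = rr j := Real.sqrt_sq hr.le
  · -- upper bound
    have h1 : (rr j)^2 ≤ 1 / (Real.pi * (j:ℝ)) := by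
      rw [le_div_iff₀ (by positivity)]
      rw [ff] at hf; linarith [hf]
    calc rr j = Real.sqrt ((rr j)^2) := (Real.sqrt_sq hr.le).symm
      _ ≤ Real.sqrt (1 / (Real.pi * (j:ℝ))) := Real.sqrt_le_sqrt h1
      _ = 1 / Real.sqrt (Real.pi * (j:ℝ)) := by rw [one_div, one_div, Real.sqrt_inv]
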